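/- If an ordinal α has cf(α) = ω₁ (or more generally cofinality > ω) and α is a limit of limits, and λⁿ divides α for every n < ω where λ is any fixed ordinal ≥ 2, then λ^ω divides α. -/

import Mathlib

/-- (Shelah, proof of Thm 3.5(D).) If an ordinal `α` has uncountable cofinality,
is a limit of limit ordinals, and is divisible by `λⁿ` for every `n < ω`
(where `λ ≥ 2`), then `α` is divisible by `λ^ω`. -/
theorem opow_omega0_dvd_of_forall_opow_nat_dvd
    (α : Ordinal) (hcof : Cardinal.aleph0 < α.cof)
    (hll : ∀ β < α, ∃ γ : Ordinal, β < γ ∧ γ < α ∧ Order.IsSuccLimit γ)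
    (lam : Ordinal) (hlam : 2 ≤ lam)
    (hdvd : ∀ n : ℕ, (lam ^ (n : Ordinal)) ∣ α) :
    (lam ^ Ordinal.omega0) ∣ α := by
  have hlam1 : 1 < lam := lt_of_lt_of_le one_lt_two hlam
  have hpow0 : lam ^ Ordinal.omega0 ≠ 0 :=
    (Ordinal.opow_pos _ (lt_trans zero_lt_one hlam1)).ne'
  set q := α / (lam ^ Ordinal.omega0) with hq
  set r := α % (lam ^ Ordinal.omega0) with hr
  have hdm : lam ^ Ordinal.omega0 * q + r = α := Ordinal.div_add_mod _ _
  have hrlt : r < lam ^ Ordinal.omega0 := Ordinal.mod_lt _ hpow0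
  rcases eq_or_ne r 0 with h0 | h0
  · exact ⟨q, by rw [← hdm, h0, add_zero]⟩
  · exfalso
    obtain ⟨n, hn⟩ := (Ordinal.lt_omega0).1
      (Ordinal.lt_log_of_lt_opow Ordinal.omega0_ne_zero hrlt)
    have hrn : r < lam ^ ((n + 1 : ℕ) : Ordinal) := by
      have := Ordinal.lt_opow_succ_log_self hlam1 r
      rwa [hn, ← Ordinal.natCast_succ] at this
    have hdn : lam ^ ((n + 1 : ℕ) : Ordinal) ∣ r := by
      have h1 : lam ^ ((n + 1 : ℕ) : Ordinal) ∣ lam ^ Ordinal.omega0 * q := by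
        refine Dvd.dvd.mul_right ?_ q
        exact Ordinal.opow_dvd_opow lam (Ordinal.nat_lt_omega0 (n + 1)).le
      have h2 : lam ^ ((n + 1 : ℕ) : Ordinal) ∣ α := hdvd (n + 1)
      have : r = α - lam ^ Ordinal.omega0 * q := by
        rw [← hdm, Ordinal.add_sub_cancel]
      rw [this]
      obtain ⟨x, hx⟩ := h2
      obtain ⟨y, hy⟩ := h1
      rw [hx, hy, ← Ordinal.mul_sub]
      exact Dvd.intro _ rfl
    have : lam ^ ((n + 1 : ℕ) : Ordinal) ≤ r := Ordinal.le_of_dvd h0 hdn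
    exact absurd hrn (not_lt.2 this)
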